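/- For any α ∈ [0, 1) and any real z ≥ 1, the inequality (1 - z^{α-1})/(1 - α) ≤ (log z)^α holds, with the convention 0^0 = 1 when z = 1 and α = 0. -/

import Mathlib

open Real MeasureTheory Set

theorem ugly_ineq (α : ℝ) (hα : α ∈ Set.Ico (0 : ℝ) 1) (z : ℝ) (hz : 1 ≤ z) :
    (1 - z ^ (α - 1)) / (1 - α) ≤ (Real.log z) ^ α := by
  obtain ⟨hα0, hα1⟩ := hα
  have hz0 : (0:ℝ) < z := lt_of_lt_of_le one_pos hz
  rcases eq_or_lt_of_le hα0 with h0 | h0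
  · -- α = 0
    subst h0
    simp only [Real.rpow_zero]
    rw [zero_sub, sub_zero, div_one]
    have : (0:ℝ) ≤ z ^ (-1 : ℝ) := Real.rpow_nonneg hz0.le _
    linarith
  · -- 0 < α < 1
    set L := Real.log z with hL
    have hL0 : 0 ≤ L := Real.log_nonneg hz
    have h1α : 0 < 1 - α := by linarith
    set μ := volume.restrict (Ioc (0:ℝ) L) with hμ
    haveI : IsFiniteMeasure μ := by
      constructor
      rw [hμ, Measure.restrict_apply_univ]
      exact measure_Ioc_lt_top
    set p := 1 / (1 - α) with hp
    set q := 1 / α with hq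
    have hpq : p.HolderConjugate q := by
      refine Real.holderConjugate_iff.mpr ⟨?_, ?_⟩
      · rw [hp]
        rw [lt_div_iff₀ h1α]
        linarith
      · rw [hp, hq, one_div, one_div, inv_inv, inv_inv]
        linarith
    set f : ℝ → ℝ := fun v => Real.exp ((α - 1) * v) with hf
    set g : ℝ → ℝ := fun _ => (1:ℝ) with hg
    have hf_meas : AEStronglyMeasurable f μ := by
      exact (Real.continuous_exp.comp (continuous_const.mul continuous_id)).aestronglyMeasurable
    have hf_mem : MemLp f (ENNReal.ofReal p) μ := by
      apply MemLp.of_bound hf_meas 1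
      filter_upwards [ae_restrict_mem measurableSet_Ioc] with v hv
      rw [Real.norm_eq_abs, abs_of_pos (Real.exp_pos _)]
      apply Real.exp_le_one_iff.mpr
      have : 0 ≤ v := le_of_lt hv.1
      nlinarith
    have hg_mem : MemLp g (ENNReal.ofReal q) μ := memLp_const 1
    have hf_nonneg : (0:ℝ → ℝ) ≤ᵐ[μ] f := by
      filter_upwards with v
      exact (Real.exp_pos _).le
    have hg_nonneg : (0:ℝ → ℝ) ≤ᵐ[μ] g := by
      filter_upwards with v
      exact zero_le_one
    have holder := MeasureTheory.integral_mul_le_Lp_mul_Lq_of_nonneg hpq hf_nonneg hg_nonneg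
      hf_mem hg_mem
    -- simplify the three integrals
    have key1 : ∫ v, f v * g v ∂μ = (1 - z ^ (α - 1)) / (1 - α) := by
      have : ∫ v, f v * g v ∂μ = ∫ v in (0:ℝ)..L, Real.exp ((α - 1) * v) := by
        rw [intervalIntegral.integral_of_le hL0]
        simp [hμ, hf, hg]
      rw [this]
      have hc : α - 1 ≠ 0 := by linarith
      have heq := intervalIntegral.smul_integral_comp_mul_left (a := (0:ℝ)) (b := L)
        (f := Real.exp) (α - 1)
      rw [smul_eq_mul, integral_exp] at heq
      have hzpow : z ^ (α - 1) = Real.exp ((α - 1) * L) := by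
        rw [Real.rpow_def_of_pos hz0, mul_comm]
      have : (α - 1) * ∫ v in (0:ℝ)..L, Real.exp ((α - 1) * v)
          = Real.exp ((α - 1) * L) - 1 := by
        rw [heq, mul_zero, Real.exp_zero]
      field_simp [hzpow]
      nlinarith [this]
    have key2 : (∫ v, f v ^ p ∂μ) ^ (1 / p) ≤ 1 := by
      have hfp : ∀ v, f v ^ p = Real.exp (-v) := by
        intro v
        show Real.exp ((α - 1) * v) ^ p = Real.exp (-v)
        rw [← Real.exp_log (Real.exp_pos ((α - 1) * v))]
        rw [Real.log_exp]
        rw [← Real.exp_mul]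
        congr 1
        rw [hp]
        field_simp
        ring
      have hint : ∫ v, f v ^ p ∂μ ≤ 1 := by
        simp only [hfp]
        rw [hμ, ← integral_exp_neg_Ioi_zero]
        have hInt : IntegrableOn (fun v : ℝ => Real.exp (-v)) (Ioi 0) := by
          simpa using exp_neg_integrableOn_Ioi 0 one_pos
        apply setIntegral_mono_set hInt
        · filter_upwards with v
          exact (Real.exp_pos _).le
        · filter_upwards with v hv
          exact hv.1
      have hnn : 0 ≤ ∫ v, f v ^ p ∂μ := by
        apply integral_nonneg
        intro v
        exact Real.rpow_nonneg (Real.exp_pos _).le _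
      exact Real.rpow_le_one hnn hint (by positivity)
    have key3 : (∫ v, g v ^ q ∂μ) ^ (1 / q) = L ^ α := by
      have : ∫ v, g v ^ q ∂μ = L := by
        simp only [hg, Real.one_rpow]
        rw [hμ, setIntegral_const, smul_eq_mul, mul_one, measureReal_def, Real.volume_Ioc,
          ENNReal.toReal_ofReal (by linarith), sub_zero]
      rw [this, hq, one_div_one_div]
    rw [key1, key3] at holder
    have hLα : 0 ≤ L ^ α := Real.rpow_nonneg hL0 _
    calc (1 - z ^ (α - 1)) / (1 - α)
        ≤ (∫ v, f v ^ p ∂μ) ^ (1 / p) * L ^ α := holder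
      _ ≤ 1 * L ^ α := by
          apply mul_le_mul_of_nonneg_right key2 hLα
      _ = L ^ α := one_mul _
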